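/- Let a ≥ 3 be an integer. Then the infinite product ∏_{n=1}^{∞} cos²(π·a^{−n}) satisfies ∏_{n=1}^{∞} cos²(π·a^{−n}) ≥ (4/π²)·cos²(π/a) > 0. -/

import Mathlib

open Real

private lemma aux_prod_sin (x : ℝ) : ∀ m : ℕ,
    (2 ^ m : ℝ) * Real.sin (x / 2 ^ m) * ∏ k ∈ Finset.range m, Real.cos (x / 2 ^ (k + 1))
      = Real.sin x := by
  intro m
  induction m with
  | zero => simp
  | succ m ih =>
    have h2 : x / 2 ^ m = 2 * (x / 2 ^ (m + 1)) := by
      rw [pow_succ]; ring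
    rw [h2, Real.sin_two_mul] at ih
    rw [Finset.prod_range_succ]
    linear_combination ih

private lemma cos_prod_lb (m : ℕ) :
    2 / π ≤ ∏ k ∈ Finset.range m, Real.cos (π / 2 ^ (k + 2)) := by
  have hx : ∀ k : ℕ, (π / 2) / 2 ^ (k + 1) = π / 2 ^ (k + 2) := by
    intro k
    rw [div_div, ← pow_succ']
  have h := aux_prod_sin (π / 2) m
  simp only [hx, Real.sin_pi_div_two] at h
  set D : ℝ := (2 ^ m : ℝ) * Real.sin (π / 2 / 2 ^ m) with hD
  have hpos : (0 : ℝ) < π / 2 / 2 ^ m := by positivity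
  have h1m : (1 : ℝ) ≤ 2 ^ m := one_le_pow₀ (by norm_num)
  have hlt : π / 2 / 2 ^ m < π := by
    have hle : π / 2 / 2 ^ m ≤ π / 2 := div_le_self (by positivity) h1m
    linarith [Real.pi_pos]
  have hDpos : 0 < D := by
    have := Real.sin_pos_of_pos_of_lt_pi hpos hlt
    positivity
  have hDle : D ≤ π / 2 := by
    have hsle : Real.sin (π / 2 / 2 ^ m) ≤ π / 2 / 2 ^ m := Real.sin_le hpos.le
    calc D ≤ (2 ^ m : ℝ) * (π / 2 / 2 ^ m) := by
              exact mul_le_mul_of_nonneg_left hsle (by positivity)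
      _ = π / 2 := by field_simp
  have hP : (∏ k ∈ Finset.range m, Real.cos (π / 2 ^ (k + 2))) = 1 / D := by
    rw [eq_div_iff hDpos.ne']
    linear_combination h
  rw [hP]
  rw [div_le_div_iff₀ Real.pi_pos hDpos]
  linarith

private lemma finite_lb (a : ℕ) (ha : 3 ≤ a) (N : ℕ) :
    (4 / π ^ 2) * Real.cos (π / a) ^ 2
      ≤ ∏ n ∈ Finset.range N, Real.cos (π / (a : ℝ) ^ (n + 1)) ^ 2 := by
  have hA : (3 : ℝ) ≤ (a : ℝ) := by exact_mod_cast ha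
  have hA2 : (2 : ℝ) ≤ (a : ℝ) := by linarith
  have hπ := Real.pi_gt_three
  cases N with
  | zero =>
    simp only [Finset.range_zero, Finset.prod_empty]
    have hc : Real.cos (π / a) ^ 2 ≤ 1 := Real.cos_sq_le_one _
    rw [div_mul_eq_mul_div, div_le_one (by positivity)]
    nlinarith
  | succ M =>
    rw [Finset.prod_range_succ']
    have h0 : Real.cos (π / (a : ℝ) ^ (0 + 1)) ^ 2 = Real.cos (π / a) ^ 2 := by
      norm_num
    rw [h0]
    have hstep : (4 / π ^ 2)
        ≤ ∏ n ∈ Finset.range M, Real.cos (π / (a : ℝ) ^ (n + 1 + 1)) ^ 2 := by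
      have h1 : ∀ n ∈ Finset.range M,
          Real.cos (π / (2 : ℝ) ^ (n + 2)) ^ 2 ≤ Real.cos (π / (a : ℝ) ^ (n + 1 + 1)) ^ 2 := by
        intro n _
        have h2pow : (2 : ℝ) ≤ 2 ^ (n + 2) := by
          calc (2:ℝ) = 2 ^ 1 := (pow_one 2).symm
            _ ≤ 2 ^ (n + 2) := pow_le_pow_right₀ one_le_two (by omega)
        have h2pos : (0:ℝ) < 2 ^ (n + 2) := by positivity
        have harg : π / (a : ℝ) ^ (n + 1 + 1) ≤ π / (2 : ℝ) ^ (n + 2) := by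
          gcongr
          all_goals first | linarith | norm_num
        have hle2 : π / (2 : ℝ) ^ (n + 2) ≤ π / 2 := by
          gcongr
          all_goals first | exact Real.pi_pos.le | exact h2pow | linarith
        have hle : π / (2 : ℝ) ^ (n + 2) ≤ π := by
          have := div_le_self Real.pi_pos.le (by linarith : (1:ℝ) ≤ 2 ^ (n + 2))
          linarith
        have hcc : Real.cos (π / (2 : ℝ) ^ (n + 2))
            ≤ Real.cos (π / (a : ℝ) ^ (n + 1 + 1)) :=
          Real.cos_le_cos_of_nonneg_of_le_pi (by positivity) hle harg
        have hc0 : 0 ≤ Real.cos (π / (2 : ℝ) ^ (n + 2)) := by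
          apply Real.cos_nonneg_of_mem_Icc
          constructor
          · have : (0:ℝ) < π / 2 ^ (n + 2) := by positivity
            linarith [Real.pi_pos]
          · exact hle2
        exact pow_le_pow_left₀ hc0 hcc 2
      calc (4 / π ^ 2)
          = (2 / π) ^ 2 := by rw [div_pow]; norm_num
        _ ≤ (∏ n ∈ Finset.range M, Real.cos (π / (2 : ℝ) ^ (n + 2))) ^ 2 :=
            pow_le_pow_left₀ (by positivity) (cos_prod_lb M) 2
        _ = ∏ n ∈ Finset.range M, Real.cos (π / (2 : ℝ) ^ (n + 2)) ^ 2 := by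
            rw [← Finset.prod_pow]
        _ ≤ _ := Finset.prod_le_prod (fun n _ => by positivity) h1
    exact mul_le_mul_of_nonneg_right hstep (sq_nonneg _)

theorem prod_cos_sq_pos (a : ℕ) (ha : 3 ≤ a) :
    (4 / π ^ 2) * Real.cos (π / a) ^ 2 ≤ (∏' n : ℕ, Real.cos (π / (a : ℝ) ^ (n + 1)) ^ 2) ∧
      0 < (4 / π ^ 2) * Real.cos (π / a) ^ 2 := by
  have hA : (3 : ℝ) ≤ (a : ℝ) := by exact_mod_cast ha
  have hπ := Real.pi_gt_three
  set f : ℕ → ℝ := fun n => Real.cos (π / (a : ℝ) ^ (n + 1)) ^ 2 with hf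
  have hApos : (0:ℝ) < (a : ℝ) := by linarith
  -- every term is positive
  have harg : ∀ n : ℕ, 0 < π / (a : ℝ) ^ (n + 1) ∧ π / (a : ℝ) ^ (n + 1) ≤ π / 3 := by
    intro n
    have hpow : (3:ℝ) ≤ (a:ℝ) ^ (n + 1) := by
      calc (3:ℝ) ≤ (a:ℝ) := hA
        _ = (a:ℝ) ^ 1 := (pow_one _).symm
        _ ≤ (a:ℝ) ^ (n + 1) := pow_le_pow_right₀ (by linarith) (by omega)
    constructor
    · positivity
    · gcongr
      all_goals first | exact Real.pi_pos.le | exact hpow | linarith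
  have hcospos : ∀ n : ℕ, (1 : ℝ) / 2 ≤ Real.cos (π / (a : ℝ) ^ (n + 1)) := by
    intro n
    obtain ⟨h1, h2⟩ := harg n
    have := Real.cos_le_cos_of_nonneg_of_le_pi (by positivity : (0:ℝ) ≤ π / (a:ℝ) ^ (n+1))
      (by linarith [Real.pi_pos] : π / 3 ≤ π) h2
    calc (1:ℝ)/2 = Real.cos (π / 3) := by rw [Real.cos_pi_div_three]
      _ ≤ _ := this
  have hfpos : ∀ n : ℕ, 0 < f n := by
    intro n
    have := hcospos n
    simp only [hf]
    nlinarith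
  -- summability of logs
  have hgsum : Summable (fun n => -Real.log (f n)) := by
    apply Summable.of_nonneg_of_le (fun n => ?_) (fun n => ?_)
      (Summable.mul_left (4 * π ^ 2) (summable_geometric_of_lt_one
        (by norm_num : (0:ℝ) ≤ 1/9) (by norm_num)))
    · rw [neg_nonneg]
      apply Real.log_nonpos (hfpos n).le
      simp only [hf]
      exact Real.cos_sq_le_one _
    · -- -log (f n) ≤ 4π² (1/9)^n
      obtain ⟨hx1, hx2⟩ := harg n
      set x := π / (a : ℝ) ^ (n + 1) with hx
      have hfn : f n = Real.cos x ^ 2 := by simp only [hf, hx]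
      have hcx : (1:ℝ)/2 ≤ Real.cos x := hcospos n
      have hlog : -Real.log (f n) ≤ 1 / f n - 1 := by
        have h := Real.one_sub_inv_le_log_of_pos (hfpos n)
        rw [inv_eq_one_div] at h
        linarith
      have hsin : Real.sin x ^ 2 ≤ x ^ 2 := by
        have h1 : Real.sin x ≤ x := Real.sin_le hx1.le
        have h0 : 0 ≤ Real.sin x := Real.sin_nonneg_of_nonneg_of_le_pi hx1.le
          (by linarith [Real.pi_pos])
        nlinarith
      have hs : Real.sin x ^ 2 = 1 - Real.cos x ^ 2 := by
        nlinarith [Real.sin_sq_add_cos_sq x]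
      have hfval : 1 / f n - 1 = Real.sin x ^ 2 / f n := by
        rw [hfn, hs, sub_div, div_self (by positivity : (Real.cos x ^ 2) ≠ 0)]
      have hfquarter : (1:ℝ)/4 ≤ f n := by rw [hfn]; nlinarith
      have hpow3 : (3:ℝ) ^ (n+1) ≤ (a:ℝ) ^ (n+1) := pow_le_pow_left₀ (by norm_num) hA _
      have h3pos : (0:ℝ) < (3:ℝ) ^ (n+1) := by positivity
      have hxle : x ≤ π / (3:ℝ) ^ (n+1) := by
        rw [hx]; gcongr
        all_goals first | exact Real.pi_pos.le | exact hpow3 | linarith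
      have h39 : (((3:ℝ) ^ (n+1)) ^ 2 : ℝ) = 9 ^ (n+1) := by
        rw [← pow_mul, mul_comm (n+1) 2, pow_mul]; norm_num
      have h9 : π ^ 2 * (1/9:ℝ) ^ (n+1) = (π / 3 ^ (n+1)) ^ 2 := by
        rw [eq_comm, div_pow, h39, div_eq_mul_inv, one_div, inv_pow]
      have hxsq : x ^ 2 ≤ π ^ 2 * (1/9) ^ (n + 1) := by
        rw [h9]
        exact pow_le_pow_left₀ hx1.le hxle 2
      have hcnn : (0:ℝ) ≤ 4 * π ^ 2 * (1/9) ^ n := by positivity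
      calc -Real.log (f n) ≤ 1 / f n - 1 := hlog
        _ = Real.sin x ^ 2 / f n := hfval
        _ ≤ x ^ 2 / (1/4) := by
            apply div_le_div₀ (by positivity) hsin (by norm_num) hfquarter
        _ = 4 * x ^ 2 := by ring
        _ ≤ 4 * (π ^ 2 * (1/9) ^ (n+1)) := by linarith
        _ ≤ 4 * π ^ 2 * (1/9) ^ n := by
            have h : (1/9:ℝ) ^ (n+1) ≤ (1/9:ℝ) ^ n :=
              pow_le_pow_of_le_one (by norm_num) (by norm_num) (by omega)
            nlinarith [sq_nonneg π, h]
  have hlsum : Summable (fun n => Real.log (f n)) := by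
    have := hgsum.neg
    simpa using this
  -- multipliability
  have hmult : Multipliable f := by
    have h1 : HasProd (fun n => Real.exp (Real.log (f n)))
        (Real.exp (∑' n, Real.log (f n))) := hlsum.hasSum.rexp
    have h2 : (fun n => Real.exp (Real.log (f n))) = f :=
      funext fun n => Real.exp_log (hfpos n)
    rw [h2] at h1
    exact ⟨_, h1⟩
  constructor
  · have htend := hmult.hasProd.tendsto_prod_nat
    exact ge_of_tendsto' htend (fun N => finite_lb a ha N)
  · have hc := hcospos 0
    have h0 : Real.cos (π / (a : ℝ)) = Real.cos (π / (a : ℝ) ^ (0 + 1)) := by norm_num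
    have : (0:ℝ) < Real.cos (π / (a : ℝ)) := by rw [h0]; linarith
    positivity
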